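/- In a k-additive pretriangulated category C (k a finite field) in which all Hom-spaces are finite-dimensional and the endomorphism ring of every indecomposable object is local, the following holds. Let M --(f1,f2)--> N1 ⊕ N2 --(g1;g2)--> L --h--> M[1] be a distinguished triangle whose first morphism has components f1 : M -> N1 and f2 : M -> N2, and suppose f2 = 0. Then there exist objects L1, L2, morphisms g11 : N1 -> L1 and h1 : L1 -> M[1], and an isomorphism g22 : N2 -> L2, such that M --f1--> N1 --g11--> L1 --h1--> M[1] is a distinguished triangle and the given triangle is isomorphic (as a triangle, via the identity on M and N1 ⊕ N2) to the triangle M --(f1,0)--> N1 ⊕ N2 --diag(g11,g22)--> L1 ⊕ L2 --(h1;0)--> M[1]. In particular the given triangle is the direct sum of the distinguished triangle (f1, g11, h1) and the contractible triangle 0 -> N2 --g22--> L2 -> 0. -/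

import Mathlib

open CategoryTheory CategoryTheory.Limits CategoryTheory.Pretriangulated ZeroObject

universe v u

section Aux

variable {C : Type u} [CategoryTheory.Category.{v} C] [Preadditive C]
  [HasZeroObject C] [HasBinaryBiproducts C] [HasShift C ℤ]
  [∀ n : ℤ, (CategoryTheory.shiftFunctor C n).Additive] [Pretriangulated C]

/-- The triangle `0 ⟶ N ⟶ N ⟶ 0⟦1⟧`. -/
@[reducible] noncomputable def zeroTri (N : C) : Triangle C :=
  ⟨(0 : C), N, N, (0 : (0 : C) ⟶ N), 𝟙 N, 0⟩

@[simp] lemma zeroTri_obj₁ (N : C) : (zeroTri N).obj₁ = (0 : C) := rfl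
@[simp] lemma zeroTri_obj₂ (N : C) : (zeroTri N).obj₂ = N := rfl
@[simp] lemma zeroTri_obj₃ (N : C) : (zeroTri N).obj₃ = N := rfl
@[simp] lemma zeroTri_mor₁ (N : C) : (zeroTri N).mor₁ = 0 := rfl
@[simp] lemma zeroTri_mor₂ (N : C) : (zeroTri N).mor₂ = 𝟙 N := rfl
@[simp] lemma zeroTri_mor₃ (N : C) : (zeroTri N).mor₃ = 0 := rfl

lemma zeroTri_dist (N : C) : zeroTri N ∈ distTriang C := by
  refine isomorphic_distinguished _ (inv_rot_of_distTriang _ (contractible_distinguished N)) _ ?_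
  refine Triangle.isoMk _ _
    (IsZero.iso (isZero_zero C) ((shiftFunctor C (-1 : ℤ)).map_isZero (isZero_zero C)))
    (Iso.refl _) (Iso.refl _) ((isZero_zero C).eq_of_src _ _)
    (by dsimp [Triangle.invRotate, contractibleTriangle]; try simp; rfl)
    (IsZero.eq_of_tgt ((shiftFunctor C (1 : ℤ)).map_isZero
      ((shiftFunctor C (-1 : ℤ)).map_isZero (isZero_zero C))) _ _)

/-- A pair of triangles as a `WalkingPair`-indexed family. -/
@[reducible] def pairT (T₁ T₂ : Triangle C) : WalkingPair → Triangle C :=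
  fun j => WalkingPair.casesOn j T₁ T₂

@[simp] lemma pairT_left (T₁ T₂ : Triangle C) : pairT T₁ T₂ WalkingPair.left = T₁ := rfl
@[simp] lemma pairT_right (T₁ T₂ : Triangle C) : pairT T₁ T₂ WalkingPair.right = T₂ := rfl

lemma aux_sum (T₁ : Triangle C) (hT₁ : T₁ ∈ distTriang C) (N₂ : C) :
    Triangle.mk (biprod.lift T₁.mor₁ (0 : T₁.obj₁ ⟶ N₂))
      (biprod.map T₁.mor₂ (𝟙 N₂)) (biprod.desc T₁.mor₃ 0) ∈ distTriang C := by
  have hP := productTriangle_distinguished (pairT T₁ (zeroTri N₂))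
    (by rintro (_ | _); exacts [hT₁, zeroTri_dist N₂])
  refine isomorphic_distinguished _ hP _ ?_
  -- the three comparison morphisms
  let a : T₁.obj₁ ⟶ ∏ᶜ (fun j => (pairT T₁ (zeroTri N₂) j).obj₁) :=
    Pi.lift (fun j => WalkingPair.casesOn j (𝟙 T₁.obj₁) 0)
  let b : T₁.obj₂ ⊞ N₂ ⟶ ∏ᶜ (fun j => (pairT T₁ (zeroTri N₂) j).obj₂) :=
    Pi.lift (fun j => WalkingPair.casesOn j biprod.fst biprod.snd)
  let c : T₁.obj₃ ⊞ N₂ ⟶ ∏ᶜ (fun j => (pairT T₁ (zeroTri N₂) j).obj₃) :=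
    Pi.lift (fun j => WalkingPair.casesOn j biprod.fst biprod.snd)
  have haR : a ≫ Pi.π (fun j => (pairT T₁ (zeroTri N₂) j).obj₁) WalkingPair.right = 0 :=
    (isZero_zero C).eq_of_tgt _ _
  have haL : a ≫ Pi.π (fun j => (pairT T₁ (zeroTri N₂) j).obj₁) WalkingPair.left = 𝟙 _ := by
    simp [a]
  have iso₁ : IsIso a := by
    refine ⟨Pi.π _ WalkingPair.left, haL, ?_⟩
    apply Pi.hom_ext
    rintro (_ | _)
    · simp only [Category.assoc, haL, Category.comp_id, Category.id_comp]
    · exact (isZero_zero C).eq_of_tgt _ _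
  have iso₂ : IsIso b := by
    refine ⟨biprod.lift (Pi.π _ WalkingPair.left) (Pi.π _ WalkingPair.right), ?_, ?_⟩
    · apply biprod.hom_ext <;> simp [b]
    · apply Pi.hom_ext
      rintro (_ | _) <;> simp [b]
  have iso₃ : IsIso c := by
    refine ⟨biprod.lift (Pi.π _ WalkingPair.left) (Pi.π _ WalkingPair.right), ?_, ?_⟩
    · apply biprod.hom_ext <;> simp [c]
    · apply Pi.hom_ext
      rintro (_ | _) <;> simp [c]
  refine Triangle.isoMk _ _ (@asIso _ _ _ _ a iso₁) (@asIso _ _ _ _ b iso₂) (@asIso _ _ _ _ c iso₃) ?_ ?_ ?_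
  · -- comm₁
    change biprod.lift T₁.mor₁ 0 ≫ b = a ≫ Limits.Pi.map (fun j => (pairT T₁ (zeroTri N₂) j).mor₁)
    apply Pi.hom_ext
    rintro (_ | _)
    · simp [a, b, productTriangle]
    · simp [a, b, productTriangle, haR]
  · -- comm₂
    change biprod.map T₁.mor₂ (𝟙 N₂) ≫ c = b ≫ Limits.Pi.map (fun j => (pairT T₁ (zeroTri N₂) j).mor₂)
    apply Pi.hom_ext
    rintro (_ | _)
    · simp [b, c, productTriangle]
    · simp [b, c, productTriangle]
  · -- comm₃
    change biprod.desc T₁.mor₃ 0 ≫ (shiftFunctor C (1 : ℤ)).map a =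
      c ≫ (Limits.Pi.map (fun j => (pairT T₁ (zeroTri N₂) j).mor₃) ≫
        inv (piComparison (shiftFunctor C (1 : ℤ)) (fun j => (pairT T₁ (zeroTri N₂) j).obj₁)))
    rw [← cancel_mono (piComparison (shiftFunctor C (1 : ℤ))
      (fun j => (pairT T₁ (zeroTri N₂) j).obj₁))]
    conv_rhs => rw [Category.assoc, Category.assoc, IsIso.inv_hom_id, Category.comp_id]
    apply Pi.hom_ext
    rintro (_ | _)
    · rw [Category.assoc, Category.assoc, piComparison_comp_π, ← Functor.map_comp, haL]
      simp only [CategoryTheory.Functor.map_id, Category.comp_id, limMap_π]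
      apply biprod.hom_ext' <;> simp [c]
    · rw [Category.assoc, Category.assoc, piComparison_comp_π, ← Functor.map_comp, haR]
      simp only [Functor.map_zero, comp_zero, limMap_π]
      simp [c]

end Aux

/-- a distinguished triangle whose first morphism has a zero component
splits off a contractible summand. -/
theorem stmt0 {k : Type*} [Field k] [Finite k]
    {C : Type u} [CategoryTheory.Category.{v} C] [Preadditive C] [CategoryTheory.Linear k C]
    [HasZeroObject C] [HasBinaryBiproducts C] [HasShift C ℤ]
    [∀ n : ℤ, (CategoryTheory.shiftFunctor C n).Additive] [Pretriangulated C]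
    [∀ X Y : C, FiniteDimensional k (X ⟶ Y)]
    (hloc : ∀ X : C, Indecomposable X → IsLocalRing (CategoryTheory.End X))
    {M N₁ N₂ L : C} (f₁ : M ⟶ N₁) (f₂ : M ⟶ N₂)
    (g : N₁ ⊞ N₂ ⟶ L) (h : L ⟶ M⟦(1 : ℤ)⟧)
    (hf₂ : f₂ = 0)
    (hT : Triangle.mk (biprod.lift f₁ f₂) g h ∈ distTriang C) :
    ∃ (L₁ L₂ : C) (g₁₁ : N₁ ⟶ L₁) (h₁ : L₁ ⟶ M⟦(1 : ℤ)⟧) (g₂₂ : N₂ ⟶ L₂),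
      IsIso g₂₂ ∧
      Triangle.mk f₁ g₁₁ h₁ ∈ (distTriang C) ∧
      ∃ e : L ≅ L₁ ⊞ L₂,
        g ≫ e.hom = biprod.map g₁₁ g₂₂ ∧
        h = e.hom ≫ biprod.desc h₁ 0 := by
  subst hf₂
  obtain ⟨L₁, g₁₁, h₁, hT₁⟩ := distinguished_cocone_triangle f₁
  have hsum := aux_sum (Triangle.mk f₁ g₁₁ h₁) hT₁ N₂
  set φ := completeDistinguishedTriangleMorphism
    (Triangle.mk (biprod.lift f₁ (0 : M ⟶ N₂)) g h) _ hT hsum (𝟙 M) (𝟙 (N₁ ⊞ N₂))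
    (by exact (Category.comp_id _).trans (Category.id_comp _).symm) with hφ
  have hφ₁ : φ.hom₁ = 𝟙 M := rfl
  have hφ₂ : φ.hom₂ = 𝟙 (N₁ ⊞ N₂) := rfl
  have hφ₃ : IsIso φ.hom₃ := isIso₃_of_isIso₁₂ φ hT hsum
    (by rw [hφ₁]; exact ⟨𝟙 M, by exact Category.id_comp _, by exact Category.id_comp _⟩)
      (by rw [hφ₂]; exact ⟨𝟙 _, by exact Category.id_comp _, by exact Category.id_comp _⟩)
  refine ⟨L₁, N₂, g₁₁, h₁, 𝟙 N₂, ⟨𝟙 N₂, by simp, by simp⟩, hT₁, @asIso _ _ _ _ φ.hom₃ hφ₃, ?_, ?_⟩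
  · have h2 := φ.comm₂
    simp only [Triangle.mk_mor₂, Triangle.mk_obj₂, Triangle.mk_obj₃] at h2
    rw [hφ₂] at h2
    exact h2.trans (Category.id_comp _)
  · have h3 := φ.comm₃
    change h ≫ _ = _ at h3
    rw [hφ₁] at h3
    exact (Category.comp_id h).symm.trans
      ((congrArg (h ≫ ·) ((shiftFunctor C (1 : ℤ)).map_id M).symm).trans h3)
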